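/- Let 0 < p < 1, 0 < q < 1, 0 < s < 1, and define the Pauli channels E_1, E_2, E_3 on 2×2 matrices with Kraus operators {√p I, √(1−p) X}, {√q I, √(1−q) Z}, and {√s X, √(1−s) Z}, respectively. Then supp(E_3) ⊆ supp(E_1) + supp(E_2), and consequently E_1, E_2, E_3 cannot be unambiguously discriminated by a single use: for every ancilla dimension d_a and every unit vector ψ ∈ ℂ² ⊗ ℂ^{d_a}, the three output states (E_i ⊗ I)(|ψ⟩⟨ψ|) are not unambiguously distinguishable. -/

import Mathlib

open Matrix Kronecker
open scoped ComplexOrder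

noncomputable section

/-- A quantum operation on ℂ^d given by a finite family of Kraus operators
satisfying the completeness condition. -/
structure QuantumOp (d : ℕ) where
  m : ℕ
  K : Fin m → Matrix (Fin d) (Fin d) ℂ
  complete : ∑ k, (K k)ᴴ * K k = 1

/-- The support of a quantum operation: the span of its Kraus operators. -/
def QuantumOp.supp {d : ℕ} (E : QuantumOp d) : Submodule ℂ (Matrix (Fin d) (Fin d) ℂ) :=
  Submodule.span ℂ (Set.range E.K)

/-- The output state (E ⊗ I)(|ψ⟩⟨ψ|) = Σ_k (E^k ⊗ I)|ψ⟩⟨ψ|(E^k ⊗ I)†. -/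
def QuantumOp.output {d : ℕ} (E : QuantumOp d) (da : ℕ) (ψ : Fin d × Fin da → ℂ) :
    Matrix (Fin d × Fin da) (Fin d × Fin da) ℂ :=
  ∑ k, (E.K k ⊗ₖ (1 : Matrix (Fin da) (Fin da) ℂ)) * vecMulVec ψ (star ψ) *
    (E.K k ⊗ₖ (1 : Matrix (Fin da) (Fin da) ℂ))ᴴ

/-- States σ_1, …, σ_n are unambiguously distinguishable if there is a POVM
{Π_0, Π_1, …, Π_n} with tr(Π_i σ_j) = 0 for i ≠ j and tr(Π_i σ_i) > 0. -/
def UnambiguouslyDistinguishable {μ : Type*} [Fintype μ] [DecidableEq μ] {n : ℕ}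
    (σ : Fin n → Matrix μ μ ℂ) : Prop :=
  ∃ P0 : Matrix μ μ ℂ, ∃ P : Fin n → Matrix μ μ ℂ,
    P0.PosSemidef ∧ (∀ i, (P i).PosSemidef) ∧
    (P0 + ∑ i, P i = 1) ∧
    (∀ i j, i ≠ j → (P i * σ j).trace = 0) ∧
    (∀ i, 0 < (P i * σ i).trace)

/-- The Pauli X matrix. -/
def pauliX : Matrix (Fin 2) (Fin 2) ℂ := !![0, 1; 1, 0]

/-- The Pauli Z matrix. -/
def pauliZ : Matrix (Fin 2) (Fin 2) ℂ := !![1, 0; 0, -1]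

/-- The output state Σ_k (K_k ⊗ I)|ψ⟩⟨ψ|(K_k ⊗ I)† of the quantum operation with Kraus
operators K on the input |ψ⟩⟨ψ|, with an ancilla of dimension da. -/
def outputOf {d m da : ℕ} (K : Fin m → Matrix (Fin d) (Fin d) ℂ)
    (ψ : Fin d × Fin da → ℂ) : Matrix (Fin d × Fin da) (Fin d × Fin da) ℂ :=
  ∑ k, (K k ⊗ₖ (1 : Matrix (Fin da) (Fin da) ℂ)) * vecMulVec ψ (star ψ) *
    (K k ⊗ₖ (1 : Matrix (Fin da) (Fin da) ℂ))ᴴ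

/-- Kraus operators {√p I, √(1-p) X} of the bit-flip channel. -/
def bitFlipK (p : ℝ) : Fin 2 → Matrix (Fin 2) (Fin 2) ℂ :=
  ![(Real.sqrt p : ℂ) • 1, (Real.sqrt (1 - p) : ℂ) • pauliX]

/-- Kraus operators {√q I, √(1-q) Z} of the phase-flip channel. -/
def phaseFlipK (q : ℝ) : Fin 2 → Matrix (Fin 2) (Fin 2) ℂ :=
  ![(Real.sqrt q : ℂ) • 1, (Real.sqrt (1 - q) : ℂ) • pauliZ]

/-- Kraus operators {√s X, √(1-s) Z} of the third Pauli channel. -/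
def mixedXZK (s : ℝ) : Fin 2 → Matrix (Fin 2) (Fin 2) ℂ :=
  ![(Real.sqrt s : ℂ) • pauliX, (Real.sqrt (1 - s) : ℂ) • pauliZ]

lemma conj_vecMulVec {n : Type*} [Fintype n] (M : Matrix n n ℂ) (v : n → ℂ) :
    M * vecMulVec v (star v) * Mᴴ = vecMulVec (M *ᵥ v) (star (M *ᵥ v)) := by
  ext i j
  simp [mul_apply, vecMulVec_apply, mulVec, dotProduct, conjTranspose_apply,
    Finset.sum_mul, Finset.mul_sum, map_sum]
  congr 1; ext k; congr 1; ext l; ring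

lemma trace_mul_vecMulVec {n : Type*} [Fintype n] (A : Matrix n n ℂ) (v : n → ℂ) :
    (A * vecMulVec v (star v)).trace = star v ⬝ᵥ A *ᵥ v := by
  simp [trace, diag, mul_apply, vecMulVec_apply, dotProduct, mulVec, Finset.mul_sum]
  congr 1; ext i; congr 1; ext j; ring

lemma trace_mul_outputOf {d m da : ℕ} (A : Matrix (Fin d × Fin da) (Fin d × Fin da) ℂ)
    (K : Fin m → Matrix (Fin d) (Fin d) ℂ) (ψ : Fin d × Fin da → ℂ) :
    (A * outputOf K ψ).trace =
      ∑ k, star ((K k ⊗ₖ (1 : Matrix (Fin da) (Fin da) ℂ)) *ᵥ ψ) ⬝ᵥ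
        A *ᵥ ((K k ⊗ₖ (1 : Matrix (Fin da) (Fin da) ℂ)) *ᵥ ψ) := by
  simp only [outputOf, Finset.mul_sum, trace_sum, conj_vecMulVec, trace_mul_vecMulVec]

lemma form_eq_zero {d m da : ℕ} {A : Matrix (Fin d × Fin da) (Fin d × Fin da) ℂ}
    (hA : A.PosSemidef) {K : Fin m → Matrix (Fin d) (Fin d) ℂ} {ψ : Fin d × Fin da → ℂ}
    (h : (A * outputOf K ψ).trace = 0) (k : Fin m) :
    star ((K k ⊗ₖ (1 : Matrix (Fin da) (Fin da) ℂ)) *ᵥ ψ) ⬝ᵥ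
      A *ᵥ ((K k ⊗ₖ (1 : Matrix (Fin da) (Fin da) ℂ)) *ᵥ ψ) = 0 := by
  rw [trace_mul_outputOf] at h
  exact (Finset.sum_eq_zero_iff_of_nonneg (fun k _ => hA.dotProduct_mulVec_nonneg _)).mp h k (Finset.mem_univ k)

lemma form_smul_zero {n : Type*} [Fintype n] (A : Matrix n n ℂ) (c : ℂ) (w : n → ℂ)
    (h : star w ⬝ᵥ A *ᵥ w = 0) : star (c • w) ⬝ᵥ A *ᵥ (c • w) = 0 := by
  rw [mulVec_smul, star_smul, smul_dotProduct, dotProduct_smul, h]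
  simp


/-- supp(E₃) ⊆ supp(E₁) + supp(E₂) for the three Pauli channels, so they
cannot be unambiguously discriminated by a single use: for every ancilla dimension and
every unit input vector, the three output states are not unambiguously distinguishable. -/
theorem three_pauli_channels_not_unambig_single_use (p q s : ℝ)
    (hp₀ : 0 < p) (hp₁ : p < 1) (hq₀ : 0 < q) (hq₁ : q < 1) (hs₀ : 0 < s) (hs₁ : s < 1) :
    Submodule.span ℂ (Set.range (mixedXZK s)) ≤
      Submodule.span ℂ (Set.range (bitFlipK p)) ⊔
        Submodule.span ℂ (Set.range (phaseFlipK q)) ∧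
    ∀ (da : ℕ) (ψ : Fin 2 × Fin da → ℂ), star ψ ⬝ᵥ ψ = 1 →
      ¬ UnambiguouslyDistinguishable
          ![outputOf (bitFlipK p) ψ, outputOf (phaseFlipK q) ψ, outputOf (mixedXZK s) ψ] := by
  have hp' : (Real.sqrt (1 - p) : ℂ) ≠ 0 := by
    simp [Real.sqrt_ne_zero', sub_pos, hp₁]
  have hq' : (Real.sqrt (1 - q) : ℂ) ≠ 0 := by
    simp [Real.sqrt_ne_zero', sub_pos, hq₁]
  set c₁ : ℂ := (Real.sqrt s : ℂ) / (Real.sqrt (1 - p) : ℂ) with hc₁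
  set c₂ : ℂ := (Real.sqrt (1 - s) : ℂ) / (Real.sqrt (1 - q) : ℂ) with hc₂
  have hX : mixedXZK s 0 = c₁ • bitFlipK p 1 := by
    simp only [mixedXZK, bitFlipK, Matrix.cons_val_zero, Matrix.cons_val_one, Matrix.head_cons,
      smul_smul, hc₁, div_mul_cancel₀ _ hp']
  have hZ : mixedXZK s 1 = c₂ • phaseFlipK q 1 := by
    simp only [mixedXZK, phaseFlipK, Matrix.cons_val_zero, Matrix.cons_val_one, Matrix.head_cons,
      smul_smul, hc₂, div_mul_cancel₀ _ hq']
  constructor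
  · have m0 : mixedXZK s 0 ∈ Submodule.span ℂ (Set.range (bitFlipK p)) ⊔
        Submodule.span ℂ (Set.range (phaseFlipK q)) := by
      rw [hX]
      exact Submodule.mem_sup_left (Submodule.smul_mem _ _ (Submodule.subset_span ⟨1, rfl⟩))
    have m1 : mixedXZK s 1 ∈ Submodule.span ℂ (Set.range (bitFlipK p)) ⊔
        Submodule.span ℂ (Set.range (phaseFlipK q)) := by
      rw [hZ]
      exact Submodule.mem_sup_right (Submodule.smul_mem _ _ (Submodule.subset_span ⟨1, rfl⟩))
    rw [Submodule.span_le]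
    rintro x ⟨k, rfl⟩
    fin_cases k
    exacts [m0, m1]
  · rintro da ψ hψ ⟨P0, P, hP0, hP, hsum, hoff, hdiag⟩
    have h1 : (P 2 * outputOf (bitFlipK p) ψ).trace = 0 := by
      have := hoff 2 0 (by decide); simpa using this
    have h2 : (P 2 * outputOf (phaseFlipK q) ψ).trace = 0 := by
      have := hoff 2 1 (by decide); simpa using this
    have f1 := form_eq_zero (hP 2) h1 1
    have f2 := form_eq_zero (hP 2) h2 1
    have h3 : (P 2 * outputOf (mixedXZK s) ψ).trace = 0 := by
      rw [trace_mul_outputOf, Fin.sum_univ_two]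
      rw [hX, hZ, smul_kronecker, smul_kronecker]
      simp only [smul_mulVec]
      rw [form_smul_zero _ _ _ f1, form_smul_zero _ _ _ f2, add_zero]
    have := hdiag 2
    rw [show (![outputOf (bitFlipK p) ψ, outputOf (phaseFlipK q) ψ, outputOf (mixedXZK s) ψ] 2)
      = outputOf (mixedXZK s) ψ from rfl, h3] at this
    exact lt_irrefl 0 this
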